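/- Suppose the system has two interior equilibria E₁* = (x₁*, y₁*) and E₂* = (x₂*, y₂*) with 0 < x₁* < x₂* < 1 on the prey nullcline y = (1−x)(β+x). Then at E₂* the slope of the predator nullcline exceeds the slope of the prey nullcline, and consequently the determinant of the Jacobian at E₂* is negative; i.e., E₂* is a saddle point. -/

import Mathlib

open Matrix

/-- Determinant of the Jacobian of the full vector field
`F(x,y) = (x(1-x) - xy/(β+x), α x y h(y)/(β+x) - m y)` at `(p, q)`. -/
noncomputable def jacDet (α β m : ℝ) (h : ℝ → ℝ) (p q : ℝ) : ℝ :=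
  deriv (fun x => x * (1 - x) - x * q / (β + x)) p *
      deriv (fun y => α * p * y * h y / (β + p) - m * y) q -
    deriv (fun y => p * (1 - p) - p * y / (β + p)) q *
      deriv (fun x => α * x * q * h q / (β + x) - m * q) p

set_option maxHeartbeats 1000000 in
/-- If the system has two interior equilibria `(x₁,y₁)` and `(x₂,y₂)`
with `0 < x₁ < x₂ < 1`, then at the second one the slope of the predator nullcline
exceeds the slope of the prey nullcline, and the Jacobian determinant there is
negative, i.e. `(x₂, y₂)` is a saddle. -/
theorem stmt7 (h h' h'' : ℝ → ℝ) (α β m : ℝ) (x₁ y₁ x₂ y₂ : ℝ)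
    (hm : 0 < m) (hαm : m < α) (hβ : 0 < β)
    (hd1 : ∀ y, 0 ≤ y → HasDerivAt h (h' y) y)
    (hd2 : ∀ y, 0 ≤ y → HasDerivAt h' (h'' y) y)
    (hpos : ∀ y, 0 ≤ y → 0 < h' y)
    (hneg : ∀ y, 0 ≤ y → h'' y < 0)
    (hx1 : 0 < x₁) (h12 : x₁ < x₂) (hx2 : x₂ < 1)
    (hy1 : 0 < y₁) (hy2 : 0 < y₂)
    (p1 : y₁ = (1 - x₁) * (β + x₁)) (p2 : y₂ = (1 - x₂) * (β + x₂))
    (q1 : α * x₁ * h y₁ / (x₁ + β) = m) (q2 : α * x₂ * h y₂ / (x₂ + β) = m) :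
    1 - β - 2 * x₂ < -(β * h y₂) / ((β + x₂) * x₂ * h' y₂) ∧
    jacDet α β m h x₂ y₂ < 0 := by
  have hα : 0 < α := hm.trans hαm
  have hx2p : 0 < x₂ := hx1.trans h12
  have hs : 0 < β + x₂ := by linarith
  have hs1 : 0 < x₁ + β := by linarith
  have hs2 : 0 < x₂ + β := by linarith
  -- auxiliary function on the prey nullcline and its first two derivatives
  set G : ℝ → ℝ := fun x => h ((1 - x) * (β + x)) - m * (β + x) / (α * x) with hGdef
  set G1 : ℝ → ℝ := fun x =>
    h' ((1 - x) * (β + x)) * (1 - β - 2 * x) + m * β / (α * x ^ 2) with hG1def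
  set G2 : ℝ → ℝ := fun x =>
    h'' ((1 - x) * (β + x)) * (1 - β - 2 * x) ^ 2 + h' ((1 - x) * (β + x)) * (-2)
      - 2 * m * β / (α * x ^ 3) with hG2def
  have hpnn : ∀ x : ℝ, 0 < x → x < 1 → 0 ≤ (1 - x) * (β + x) := by
    intro x hx0 hx1'
    have h1 : (0:ℝ) ≤ 1 - x := by linarith
    have h2 : (0:ℝ) ≤ β + x := by linarith
    exact mul_nonneg h1 h2
  have hinner : ∀ x : ℝ, HasDerivAt (fun x => (1 - x) * (β + x)) (1 - β - 2 * x) x := by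
    intro x
    have h1 : HasDerivAt (fun x : ℝ => (1 - x) * (β + x))
        ((-1) * (β + x) + (1 - x) * 1) x :=
      (((hasDerivAt_id x).const_sub 1).mul ((hasDerivAt_id x).const_add β))
    convert h1 using 1
    ring
  have hGderiv : ∀ x : ℝ, 0 < x → x < 1 → HasDerivAt G (G1 x) x := by
    intro x hx0 hx1'
    have hcomp : HasDerivAt (fun x => h ((1 - x) * (β + x)))
        (h' ((1 - x) * (β + x)) * (1 - β - 2 * x)) x :=
      (hd1 _ (hpnn x hx0 hx1')).comp x (hinner x)
    have hax : α * x ≠ 0 := by positivity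
    have hq : HasDerivAt (fun x => m * (β + x) / (α * x))
        ((m * 1 * (α * x) - m * (β + x) * (α * 1)) / (α * x) ^ 2) x :=
      (((hasDerivAt_id x).const_add β).const_mul m).div
        ((hasDerivAt_id x).const_mul α) hax
    have hfin := hcomp.sub hq
    refine hfin.congr_deriv (Eq.symm ?_)
    simp only [hG1def]
    field_simp
    ring
  have hG1deriv : ∀ x : ℝ, 0 < x → x < 1 → HasDerivAt G1 (G2 x) x := by
    intro x hx0 hx1'
    have hcomp : HasDerivAt (fun x => h' ((1 - x) * (β + x)))
        (h'' ((1 - x) * (β + x)) * (1 - β - 2 * x)) x :=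
      (hd2 _ (hpnn x hx0 hx1')).comp x (hinner x)
    have hlin : HasDerivAt (fun x : ℝ => 1 - β - 2 * x) (-2) x := by
      have := ((hasDerivAt_id x).const_mul 2).const_sub (1 - β)
      refine this.congr_deriv (Eq.symm ?_)
      ring
    have hprod : HasDerivAt (fun x => h' ((1 - x) * (β + x)) * (1 - β - 2 * x))
        (h'' ((1 - x) * (β + x)) * (1 - β - 2 * x) * (1 - β - 2 * x)
          + h' ((1 - x) * (β + x)) * (-2)) x := hcomp.mul hlin
    have hax : α * x ^ 2 ≠ 0 := by positivity
    have hq : HasDerivAt (fun x => m * β / (α * x ^ 2))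
        ((0 * (α * x ^ 2) - m * β * (α * (↑2 * x ^ 1))) / (α * x ^ 2) ^ 2) x :=
      (hasDerivAt_const x (m * β)).div ((hasDerivAt_pow 2 x).const_mul α) hax
    have hfin := hprod.add hq
    refine hfin.congr_deriv (Eq.symm ?_)
    simp only [hG2def]
    field_simp
    ring
  -- G vanishes at both equilibria
  have hhy1 : h y₁ = m * (x₁ + β) / (α * x₁) := by
    field_simp at q1 ⊢
    linarith [q1]
  have hhy2 : h y₂ = m * (x₂ + β) / (α * x₂) := by
    field_simp at q2 ⊢
    linarith [q2]
  have hGx1 : G x₁ = 0 := by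
    simp only [hGdef, ← p1, hhy1]
    field_simp
    ring
  have hGx2 : G x₂ = 0 := by
    simp only [hGdef, ← p2, hhy2]
    field_simp
    ring
  have hmem : ∀ x ∈ Set.Icc x₁ x₂, 0 < x ∧ x < 1 := by
    intro x hx
    exact ⟨lt_of_lt_of_le hx1 hx.1, lt_of_le_of_lt hx.2 hx2⟩
  -- Rolle: some interior zero of G1
  have hGcont : ContinuousOn G (Set.Icc x₁ x₂) := by
    intro x hx
    exact ((hGderiv x (hmem x hx).1 (hmem x hx).2).continuousAt).continuousWithinAt
  obtain ⟨c, hc, hG1c⟩ := exists_hasDerivAt_eq_zero h12 hGcont (hGx1.trans hGx2.symm)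
    (fun x hx => hGderiv x (hmem x (Set.mem_Icc_of_Ioo hx)).1 (hmem x (Set.mem_Icc_of_Ioo hx)).2)
  -- G1 is strictly decreasing on [x₁, x₂]
  have hanti : StrictAntiOn G1 (Set.Icc x₁ x₂) := by
    apply strictAntiOn_of_deriv_neg (convex_Icc x₁ x₂)
    · intro x hx
      exact ((hG1deriv x (hmem x hx).1 (hmem x hx).2).continuousAt).continuousWithinAt
    · intro x hx
      rw [interior_Icc] at hx
      have hx0 := (hmem x (Set.mem_Icc_of_Ioo hx)).1
      have hx1' := (hmem x (Set.mem_Icc_of_Ioo hx)).2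
      rw [(hG1deriv x hx0 hx1').deriv]
      have hnn := hpnn x hx0 hx1'
      have t1 : h'' ((1 - x) * (β + x)) * (1 - β - 2 * x) ^ 2 ≤ 0 :=
        mul_nonpos_of_nonpos_of_nonneg (hneg _ hnn).le (sq_nonneg _)
      have t2 : 0 < h' ((1 - x) * (β + x)) := hpos _ hnn
      have t3 : 0 < 2 * m * β / (α * x ^ 3) := by positivity
      simp only [hG2def]
      nlinarith
  -- key inequality: G1 x₂ < 0
  have hK : G1 x₂ < 0 := by
    have h1 : G1 x₂ < G1 c :=
      hanti (Set.mem_Icc_of_Ioo hc) (Set.right_mem_Icc.mpr h12.le) hc.2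
    rw [hG1c] at h1
    exact h1
  have hy2' : 0 < h' y₂ := hpos _ hy2.le
  have hhy2pos : 0 < h y₂ := by
    rw [hhy2]; positivity
  -- polynomial form of the key inequality
  have hK' : h' y₂ * (1 - β - 2 * x₂) * (α * x₂ ^ 2) + m * β < 0 := by
    simp only [hG1def, ← p2] at hK
    have hax : (0:ℝ) < α * x₂ ^ 2 := by positivity
    have hmul := mul_neg_of_neg_of_pos hK hax
    calc h' y₂ * (1 - β - 2 * x₂) * (α * x₂ ^ 2) + m * β
        = (h' y₂ * (1 - β - 2 * x₂) + m * β / (α * x₂ ^ 2)) * (α * x₂ ^ 2) := by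
          field_simp
      _ < 0 := hmul
  have hq2' : α * x₂ * h y₂ = m * (x₂ + β) := by
    field_simp at q2
    linarith [q2]
  constructor
  · -- slope comparison
    have hD : (0:ℝ) < (β + x₂) * x₂ * h' y₂ := by positivity
    rw [lt_div_iff₀ hD]
    nlinarith [mul_neg_of_neg_of_pos hK' hs, hq2', mul_pos hα hx2p,
      mul_pos (mul_pos hα hx2p) hs]
  · -- Jacobian determinant
    have hsne : (β + x₂) ≠ 0 := ne_of_gt hs
    -- derivative A
    have hA : HasDerivAt (fun x => x * (1 - x) - x * y₂ / (β + x))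
        (1 - 2 * x₂ - y₂ * β / (β + x₂) ^ 2) x₂ := by
      have h1 : HasDerivAt (fun x : ℝ => x * (1 - x)) (1 * (1 - x₂) + x₂ * (-1)) x₂ :=
        (hasDerivAt_id x₂).mul ((hasDerivAt_id x₂).const_sub 1)
      have h2 : HasDerivAt (fun x : ℝ => x * y₂ / (β + x))
          ((1 * y₂ * (β + x₂) - x₂ * y₂ * 1) / (β + x₂) ^ 2) x₂ :=
        ((hasDerivAt_id x₂).mul_const y₂).div ((hasDerivAt_id x₂).const_add β) hsne
      have hfin := h1.sub h2
      refine hfin.congr_deriv (Eq.symm ?_)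
      field_simp
      ring
    -- derivative B
    have hB : HasDerivAt (fun y => α * x₂ * y * h y / (β + x₂) - m * y)
        ((α * x₂ * h y₂ + α * x₂ * y₂ * h' y₂) / (β + x₂) - m) y₂ := by
      have h1 : HasDerivAt (fun y : ℝ => α * x₂ * y * h y)
          (α * x₂ * 1 * h y₂ + α * x₂ * y₂ * h' y₂) y₂ :=
        (((hasDerivAt_id y₂).const_mul (α * x₂)).mul (hd1 y₂ hy2.le))
      have hfin := (h1.div_const (β + x₂)).sub ((hasDerivAt_id y₂).const_mul m)
      refine hfin.congr_deriv (Eq.symm ?_)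
      ring
    -- derivative C
    have hC : HasDerivAt (fun y => x₂ * (1 - x₂) - x₂ * y / (β + x₂))
        (-(x₂ / (β + x₂))) y₂ := by
      have h2 : HasDerivAt (fun y : ℝ => x₂ * y / (β + x₂)) (x₂ * 1 / (β + x₂)) y₂ :=
        ((hasDerivAt_id y₂).const_mul x₂).div_const (β + x₂)
      have hfin := (hasDerivAt_const y₂ (x₂ * (1 - x₂))).sub h2
      refine hfin.congr_deriv (Eq.symm ?_)
      ring
    -- derivative D
    have hD : HasDerivAt (fun x => α * x * y₂ * h y₂ / (β + x) - m * y₂)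
        (α * y₂ * h y₂ * β / (β + x₂) ^ 2) x₂ := by
      have h1 : HasDerivAt (fun x : ℝ => α * x * y₂ * h y₂)
          (α * 1 * y₂ * h y₂) x₂ :=
        ((((hasDerivAt_id x₂).const_mul α).mul_const y₂).mul_const (h y₂))
      have h2 : HasDerivAt (fun x : ℝ => α * x * y₂ * h y₂ / (β + x))
          ((α * 1 * y₂ * h y₂ * (β + x₂) - α * x₂ * y₂ * h y₂ * 1) / (β + x₂) ^ 2) x₂ :=
        h1.div ((hasDerivAt_id x₂).const_add β) hsne
      have hfin := h2.sub_const (m * y₂)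
      refine hfin.congr_deriv (Eq.symm ?_)
      field_simp
      ring
    have hjac : jacDet α β m h x₂ y₂ =
        (1 - 2 * x₂ - y₂ * β / (β + x₂) ^ 2) *
          ((α * x₂ * h y₂ + α * x₂ * y₂ * h' y₂) / (β + x₂) - m)
        - (-(x₂ / (β + x₂))) * (α * y₂ * h y₂ * β / (β + x₂) ^ 2) := by
      rw [jacDet, hA.deriv, hB.deriv, hC.deriv, hD.deriv]
    rw [hjac]
    set H : ℝ := h y₂ with hH
    set H' : ℝ := h' y₂ with hH'
    have hBsimp : (α * x₂ * H + α * x₂ * y₂ * H') / (β + x₂) - m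
        = α * x₂ * y₂ * H' / (β + x₂) := by
      have hm' : α * x₂ * H = m * (β + x₂) := by rw [hq2']; ring
      field_simp
      linarith [hm']
    rw [hBsimp]
    have hfact : (1 - 2 * x₂ - y₂ * β / (β + x₂) ^ 2) *
          (α * x₂ * y₂ * H' / (β + x₂))
        - (-(x₂ / (β + x₂))) * (α * y₂ * H * β / (β + x₂) ^ 2)
        = (α * x₂ * y₂ / (β + x₂) ^ 3) *
          ((β + x₂) * (x₂ * H' * (1 - β - 2 * x₂)) + β * H) := by
      rw [p2]
      field_simp
      ring
    rw [hfact]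
    apply mul_neg_of_pos_of_neg
    · positivity
    · nlinarith [mul_neg_of_neg_of_pos hK' hs, hq2', mul_pos hα hx2p,
        mul_pos (mul_pos hα hx2p) hs]
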